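/- (Lemma 2) Let N ≥ 1, k ≥ 1, and let E : Fin N → Fin N → Prop, C : Fin N → Fin N → Bool, T : Fin N → Fin N → ℂ with T a j ≠ 0 ↔ E a j, and let Ψ be the postselected coefficient function. Suppose P : Fin N → Fin k is such that every maximally matchable edge (a, j) of E satisfies P a = P j (the PM diagram is disconnected into the parts of P). Then (1) every perfect matching σ of E satisfies P (σ a) = P a for all a, and (2) there exist functions f_i : (Fin N → Bool) → ℂ for i : Fin k, where each f_i s depends only on the values s j with P j = i, such that Ψ s = ∏_{i : Fin k} f_i s for all s; i.e., the postselected state is k-separable under the partition induced by P. -/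

import Mathlib

open scoped Classical

/-- The postselected (bosonic) coefficient function of an LQN:
`Ψ s = Σ_{σ PM of E with outcome string s} Π_a T a (σ a)`. -/
noncomputable def lqnPsi {V : Type*} [Fintype V] [DecidableEq V]
    (E : V → V → Prop) (C : V → V → Bool) (T : V → V → ℂ)
    (s : V → Bool) : ℂ :=
  ∑ σ ∈ Finset.univ.filter (fun σ : Equiv.Perm V =>
      (∀ a, E a (σ a)) ∧ ∀ j, C (σ⁻¹ j) j = s j),
    ∏ a, T a (σ a)

section Aux

variable {N k : ℕ} (P : Fin N → Fin k)

/-- Restriction of a permutation to part `i` of `P` (identity elsewhere);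
junk value `1` if `σ` does not preserve part `i`. -/
noncomputable def lqnSplit (σ : Equiv.Perm (Fin N)) (i : Fin k) : Equiv.Perm (Fin N) :=
  if h : ∀ a, P (σ a) = i ↔ P a = i then
    Equiv.Perm.ofSubtype (σ.subtypePerm (p := fun a => P a = i) h)
  else 1

theorem lqn_fix_part (g : Fin k → Equiv.Perm (Fin N))
    (h : ∀ i a, P a ≠ i → g i a = a) (i : Fin k) (a : Fin N) :
    P (g i a) = P a := by
  by_cases hpa : P a = i
  · by_contra hne
    have hne' : P (g i a) ≠ i := fun hh => hne (hh.trans hpa.symm)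
    have h2 : g i (g i a) = g i a := h i (g i a) hne'
    have h3 : g i a = a := (g i).injective h2
    exact hne (by rw [h3])
  · rw [h i a hpa]

/-- Combine a family of part-preserving permutations into a single permutation. -/
def lqnCombineAux (g : Fin k → Equiv.Perm (Fin N))
    (h : ∀ i a, P a ≠ i → g i a = a) : Equiv.Perm (Fin N) where
  toFun a := g (P a) a
  invFun b := (g (P b))⁻¹ b
  left_inv a := by
    show (g (P (g (P a) a)))⁻¹ (g (P a) a) = a
    rw [lqn_fix_part P g h (P a) a, Equiv.Perm.coe_inv, Equiv.symm_apply_apply]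
  right_inv b := by
    have hb : P ((g (P b))⁻¹ b) = P b := by
      have h2 := lqn_fix_part P g h (P b) ((g (P b))⁻¹ b)
      rw [Equiv.Perm.coe_inv, Equiv.apply_symm_apply] at h2
      exact h2.symm
    show g (P ((g (P b))⁻¹ b)) ((g (P b))⁻¹ b) = b
    rw [hb, Equiv.Perm.coe_inv, Equiv.apply_symm_apply]

noncomputable def lqnCombine (g : Fin k → Equiv.Perm (Fin N)) : Equiv.Perm (Fin N) :=
  if h : ∀ i a, P a ≠ i → g i a = a then lqnCombineAux P g h else 1

end Aux

/-- Lemma 2: If `P : Fin N → Fin k` is such that every maximally matchable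
edge `(a, j)` satisfies `P a = P j` (the PM diagram is disconnected into the parts of
`P`), then (1) every perfect matching preserves the parts of `P`, and (2) the postselected
coefficient function factorizes as a product of `k` functions, the `i`-th depending only
on the coordinates in part `i`: the state is `k`-separable under `P`. -/
theorem lqn_lemma2 (N k : ℕ) (hN : 1 ≤ N) (hk : 1 ≤ k)
    (E : Fin N → Fin N → Prop) (C : Fin N → Fin N → Bool)
    (T : Fin N → Fin N → ℂ) (hT : ∀ a j, T a j ≠ 0 ↔ E a j)
    (P : Fin N → Fin k)
    (hP : ∀ a j : Fin N,
      (∃ σ : Equiv.Perm (Fin N), (∀ b, E b (σ b)) ∧ σ a = j) → P a = P j) :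
    (∀ σ : Equiv.Perm (Fin N), (∀ a, E a (σ a)) → ∀ a, P (σ a) = P a) ∧
    (∃ f : Fin k → (Fin N → Bool) → ℂ,
      (∀ (i : Fin k) (s t : Fin N → Bool),
        (∀ j, P j = i → s j = t j) → f i s = f i t) ∧
      ∀ s : Fin N → Bool, lqnPsi E C T s = ∏ i : Fin k, f i s) := by
  classical
  have h1 : ∀ σ : Equiv.Perm (Fin N), (∀ a, E a (σ a)) → ∀ a, P (σ a) = P a :=
    fun σ hσ a => (hP a (σ a) ⟨σ, hσ, rfl⟩).symm
  refine ⟨h1, ?_⟩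
  -- the `i`-th finset of local permutations compatible with `s` on part `i`
  set A : Fin k → (Fin N → Bool) → Finset (Equiv.Perm (Fin N)) :=
    fun i s => Finset.univ.filter (fun σ =>
      (∀ a, P a = i → E a (σ a)) ∧ (∀ a, P a ≠ i → σ a = a) ∧
      (∀ j, P j = i → C (σ⁻¹ j) j = s j)) with hA
  refine ⟨fun i s => ∑ σ ∈ A i s, ∏ a ∈ Finset.univ.filter (fun a => P a = i), T a (σ a),
    ?_, ?_⟩
  · -- locality of each factor
    intro i s t hst
    apply Finset.sum_congr
    · ext σ
      simp only [hA, Finset.mem_filter, Finset.mem_univ, true_and]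
      constructor
      · rintro ⟨he, hf, hc⟩
        refine ⟨he, hf, fun j hj => ?_⟩
        rw [hc j hj]
        exact hst j hj
      · rintro ⟨he, hf, hc⟩
        refine ⟨he, hf, fun j hj => ?_⟩
        rw [hc j hj]
        exact (hst j hj).symm
    · intro x _
      rfl
  · intro s
    rw [Finset.prod_univ_sum]
    unfold lqnPsi
    symm
    refine Finset.sum_nbij' (i := fun g => lqnCombine P g) (j := fun σ => lqnSplit P σ)
      ?_ ?_ ?_ ?_ ?_
    · -- combine maps into the PM-outcome set
      intro g hg
      rw [Fintype.mem_piFinset] at hg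
      have hg' : ∀ i, (∀ a, P a = i → E a (g i a)) ∧ (∀ a, P a ≠ i → g i a = a) ∧
          (∀ j, P j = i → C ((g i)⁻¹ j) j = s j) := by
        intro i
        have := hg i
        simpa [hA] using this
      have hfix : ∀ i a, P a ≠ i → g i a = a := fun i a => (hg' i).2.1 a
      have hc : lqnCombine P g = lqnCombineAux P g hfix := dif_pos hfix
      simp only [Finset.mem_filter, Finset.mem_univ, true_and]
      constructor
      · intro a
        rw [hc]
        exact (hg' (P a)).1 a rfl
      · intro j
        have hinv : (lqnCombine P g)⁻¹ j = (g (P j))⁻¹ j := by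
          rw [hc]; rfl
        rw [hinv]
        exact (hg' (P j)).2.2 j rfl
    · -- split maps into the product set
      intro σ hσ
      simp only [Finset.mem_filter, Finset.mem_univ, true_and] at hσ
      obtain ⟨hE, hC⟩ := hσ
      have hpres : ∀ a, P (σ a) = P a := h1 σ hE
      rw [Fintype.mem_piFinset]
      intro i
      have hiff : ∀ a, P (σ a) = i ↔ P a = i := fun a => by rw [hpres a]
      have hs : lqnSplit P σ i = Equiv.Perm.ofSubtype (σ.subtypePerm (p := fun a => P a = i) hiff) :=
        dif_pos hiff
      simp only [hA, Finset.mem_filter, Finset.mem_univ, true_and]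
      refine ⟨fun a ha => ?_, fun a ha => ?_, fun j hj => ?_⟩
      · rw [hs, Equiv.Perm.ofSubtype_subtypePerm_of_mem (p := fun a => P a = i) hiff ha]
        exact hE a
      · rw [hs, Equiv.Perm.ofSubtype_subtypePerm_of_not_mem (p := fun a => P a = i) hiff ha]
      · have hiff' : ∀ a, P (σ⁻¹ a) = i ↔ P a = i := fun a => by
          conv_rhs => rw [← Equiv.apply_symm_apply σ a, ← Equiv.Perm.coe_inv]
          rw [hpres]
        have hinv : (lqnSplit P σ i)⁻¹ j = σ⁻¹ j := by
          rw [hs, ← map_inv]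
          have : (σ.subtypePerm (p := fun a => P a = i) hiff)⁻¹ = (σ⁻¹).subtypePerm (p := fun a => P a = i) hiff' := by
            ext x
            rfl
          rw [this, Equiv.Perm.ofSubtype_subtypePerm_of_mem (p := fun a => P a = i) hiff' hj]
        rw [hinv]
        exact hC j
    · -- split ∘ combine = id
      intro g hg
      rw [Fintype.mem_piFinset] at hg
      have hfix : ∀ i a, P a ≠ i → g i a = a := by
        intro i a
        have := hg i
        simp only [hA, Finset.mem_filter, Finset.mem_univ, true_and] at this
        exact this.2.1 a
      have hc : lqnCombine P g = lqnCombineAux P g hfix := dif_pos hfix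
      funext i
      have hpres : ∀ a, P (lqnCombine P g a) = P a := by
        intro a
        rw [hc]
        exact lqn_fix_part P g hfix (P a) a
      have hiff : ∀ a, P (lqnCombine P g a) = i ↔ P a = i := fun a => by rw [hpres a]
      have hs : lqnSplit P (lqnCombine P g) i
          = Equiv.Perm.ofSubtype ((lqnCombine P g).subtypePerm (p := fun a => P a = i) hiff) := dif_pos hiff
      refine Equiv.ext fun a => ?_
      show lqnSplit P (lqnCombine P g) i a = g i a
      by_cases ha : P a = i
      · rw [hs, Equiv.Perm.ofSubtype_subtypePerm_of_mem (p := fun a => P a = i) hiff ha, hc]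
        show g (P a) a = g i a
        rw [ha]
      · rw [hs, Equiv.Perm.ofSubtype_subtypePerm_of_not_mem (p := fun a => P a = i) hiff ha,
          (hfix i a ha)]
    · -- combine ∘ split = id
      intro σ hσ
      simp only [Finset.mem_filter, Finset.mem_univ, true_and] at hσ
      have hpres : ∀ a, P (σ a) = P a := h1 σ hσ.1
      have hiff : ∀ i, ∀ a, P (σ a) = i ↔ P a = i := fun i a => by rw [hpres a]
      have hs : ∀ i, lqnSplit P σ i = Equiv.Perm.ofSubtype (σ.subtypePerm (p := fun a => P a = i) (hiff i)) :=
        fun i => dif_pos (hiff i)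
      have hfix : ∀ i a, P a ≠ i → lqnSplit P σ i a = a := fun i a ha => by
        rw [hs i, Equiv.Perm.ofSubtype_subtypePerm_of_not_mem (p := fun a => P a = i) (hiff i) ha]
      have hc : lqnCombine P (lqnSplit P σ) = lqnCombineAux P (lqnSplit P σ) hfix :=
        dif_pos hfix
      refine Equiv.ext fun a => ?_
      show lqnCombine P (lqnSplit P σ) a = σ a
      rw [hc]
      show lqnSplit P σ (P a) a = σ a
      rw [hs (P a), Equiv.Perm.ofSubtype_subtypePerm_of_mem (p := fun b => P b = P a) (hiff (P a)) rfl]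
    · -- weights agree
      intro g hg
      rw [Fintype.mem_piFinset] at hg
      have hfix : ∀ i a, P a ≠ i → g i a = a := by
        intro i a
        have := hg i
        simp only [hA, Finset.mem_filter, Finset.mem_univ, true_and] at this
        exact this.2.1 a
      have hc : lqnCombine P g = lqnCombineAux P g hfix := dif_pos hfix
      calc ∏ i, ∏ a ∈ Finset.univ.filter (fun a => P a = i), T a (g i a)
          = ∏ i, ∏ a ∈ Finset.univ.filter (fun a => P a = i), T a (lqnCombine P g a) := by
            refine Finset.prod_congr rfl fun i _ => Finset.prod_congr rfl fun a ha => ?_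
            simp only [Finset.mem_filter] at ha
            rw [hc]
            show T a (g i a) = T a (g (P a) a)
            rw [ha.2]
        _ = ∏ a, T a (lqnCombine P g a) :=
            Finset.prod_fiberwise Finset.univ P (fun a => T a (lqnCombine P g a))
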